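/- Let α, β ∈ NC(n) with α ≪ β. The correspondence sending each β-special block V of α to the block W of β with min(V) = min(W) and max(V) = max(W) is a well-defined bijection from the set of β-special blocks of α onto the set of all blocks of β. -/
import Mathlib


open scoped Classical

/-- The minimum of a finset of naturals (`0` if empty). -/
noncomputable def fmin (A : Finset ℕ) : ℕ := sInf (A : Set ℕ)

/-- The maximum of a finset of naturals (`0` if empty). -/
noncomputable def fmax (A : Finset ℕ) : ℕ := sSup (A : Set ℕ)

/-- `α` is a partition of the finite set `F ⊆ ℕ`. -/
def IsPartitionOfSet (F : Finset ℕ) (α : Finset (Finset ℕ)) : Prop :=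
  (∀ V ∈ α, V.Nonempty) ∧ (∀ V ∈ α, V ⊆ F) ∧ (∀ m ∈ F, ∃ V ∈ α, m ∈ V) ∧
    ∀ V ∈ α, ∀ W ∈ α, V ≠ W → V ∩ W = ∅

/-- `α` is a partition of `{1,…,n}`. -/
def IsPartitionOf (n : ℕ) (α : Finset (Finset ℕ)) : Prop :=
  IsPartitionOfSet (Finset.Icc 1 n) α

/-- Two distinct blocks of the family `π` cross: there are `a < b < c < d` with
`a, c` in one block and `b, d` in a different block. -/
def IsCrossing (π : Finset (Finset ℕ)) : Prop :=
  ∃ A ∈ π, ∃ B ∈ π, A ≠ B ∧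
    ∃ a ∈ A, ∃ b ∈ B, ∃ c ∈ A, ∃ d ∈ B, a < b ∧ b < c ∧ c < d

/-- `α ∈ NC(n)`: a non-crossing partition of `{1,…,n}`. -/
def IsNCPartition (n : ℕ) (α : Finset (Finset ℕ)) : Prop :=
  IsPartitionOf n α ∧ ¬ IsCrossing α

/-- Reverse refinement order `α ≤ β`: every block of `α` is contained in a block of `β`
(equivalently, every block of `β` is a union of blocks of `α`). -/
def Refines (α β : Finset (Finset ℕ)) : Prop := ∀ V ∈ α, ∃ W ∈ β, V ⊆ W

/-- The partial order `α ≪ β`: `α ≤ β` and for every block `W` of `β` there is a block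
`V` of `α` containing both `min W` and `max W`. -/
def LL (α β : Finset (Finset ℕ)) : Prop :=
  Refines α β ∧ ∀ W ∈ β, ∃ V ∈ α, fmin W ∈ V ∧ fmax W ∈ V

/-- A block `V` (of `α`) is `β`-special: some block `W` of `β` has the same min and max. -/
def SpecialBlock (β : Finset (Finset ℕ)) (V : Finset ℕ) : Prop :=
  ∃ W ∈ β, fmin V = fmin W ∧ fmax V = fmax W

/-- `V` is an outer block of `α`: no block of `α` strictly nests around it. -/
def OuterBlock (α : Finset (Finset ℕ)) (V : Finset ℕ) : Prop :=
  ∀ V' ∈ α, ¬ (fmin V' < fmin V ∧ fmax V < fmax V')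

/-- `π` is a linked partition of the finite set `F ⊆ ℕ`. -/
def IsLinkedPartitionOfSet (F : Finset ℕ) (π : Finset (Finset ℕ)) : Prop :=
  (∀ A ∈ π, A.Nonempty) ∧ (∀ A ∈ π, A ⊆ F) ∧ (∀ m ∈ F, ∃ A ∈ π, m ∈ A) ∧
    ∀ A ∈ π, ∀ B ∈ π, A ≠ B →
      A ∩ B = ∅ ∨
        (2 ≤ A.card ∧ 2 ≤ B.card ∧ (A ∩ B).card = 1 ∧ fmin A ≠ fmin B ∧
          ∀ x ∈ A ∩ B, x = fmin A ∨ x = fmin B)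

/-- `π ∈ NCL(F)`: a non-crossing linked partition of the finite set `F`. -/
def IsNCLOfSet (F : Finset ℕ) (π : Finset (Finset ℕ)) : Prop :=
  IsLinkedPartitionOfSet F π ∧ ¬ IsCrossing π

/-- `π ∈ NCL(n)`: a non-crossing linked partition of `{1,…,n}`. -/
def IsNCL (n : ℕ) (π : Finset (Finset ℕ)) : Prop :=
  IsNCLOfSet (Finset.Icc 1 n) π

/-- The number of blocks of `π` containing `m`. -/
noncomputable def coverCount (π : Finset (Finset ℕ)) (m : ℕ) : ℕ :=
  (π.filter fun A => m ∈ A).card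

/-- `m` is singly-covered by `π`: it lies in exactly one block. -/
def SinglyCovered (π : Finset (Finset ℕ)) (m : ℕ) : Prop := coverCount π m = 1

/-- `m` is doubly-covered by `π`: it lies in exactly two blocks. -/
def DoublyCovered (π : Finset (Finset ℕ)) (m : ℕ) : Prop := coverCount π m = 2

/-- The partition `π̂` generated by the blocks of `π`: its blocks are the connected
components of the ground set under the relation of lying in a common block of `π`. -/
noncomputable def genPart (π : Finset (Finset ℕ)) : Finset (Finset ℕ) :=
  (π.sup id).image fun m =>
    (π.sup id).filter fun x =>
      Relation.EqvGen (fun a b => ∃ A ∈ π, a ∈ A ∧ b ∈ A) m x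

/-- The unlinking `π̌` of a linked partition `π`. -/
noncomputable def unlink (π : Finset (Finset ℕ)) : Finset (Finset ℕ) :=
  π.image fun A => if SinglyCovered π (fmin A) then A else A.erase (fmin A)

/-- The block of `α` containing `m` (empty if there is none). -/
noncomputable def blockOf (α : Finset (Finset ℕ)) (m : ℕ) : Finset ℕ :=
  (α.filter fun V => m ∈ V).sup id

/-- The successor of `m` in the cycle on the block `V` (elements in increasing order). -/
noncomputable def nextInBlock (V : Finset ℕ) (m : ℕ) : ℕ :=
  if m = fmax V then fmin V else fmin (V.filter fun x => m < x)

/-- The predecessor of `m` in the cycle on the block `V`. -/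
noncomputable def prevInBlock (V : Finset ℕ) (m : ℕ) : ℕ :=
  if m = fmin V then fmax V else fmax (V.filter fun x => x < m)

/-- The permutation `P_α` associated to a partition `α`, as a function: each block
`{i₁ < i₂ < ⋯ < iₘ}` becomes the cycle `i₁ ↦ i₂ ↦ ⋯ ↦ iₘ ↦ i₁`. -/
noncomputable def permOf (α : Finset (Finset ℕ)) (m : ℕ) : ℕ :=
  if m ∈ blockOf α m then nextInBlock (blockOf α m) m else m

/-- The inverse permutation `P_α⁻¹`, as a function. -/
noncomputable def permOfInv (α : Finset (Finset ℕ)) (m : ℕ) : ℕ :=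
  if m ∈ blockOf α m then prevInBlock (blockOf α m) m else m

/-- The action `τ·α` of a map `τ` on a partition `α = {V₁,…,V_p}`, giving
`{τ(V₁),…,τ(V_p)}`. -/
def mapPart (τ : ℕ → ℕ) (α : Finset (Finset ℕ)) : Finset (Finset ℕ) :=
  α.image fun V => V.image τ

/-- The cycled unlinking `π° := P_{π̂}⁻¹ · π̌`. -/
noncomputable def cycUnlink (π : Finset (Finset ℕ)) : Finset (Finset ℕ) :=
  mapPart (permOfInv (genPart π)) (unlink π)

/-- `NC(n)` as a finset. -/
noncomputable def NCF (n : ℕ) : Finset (Finset (Finset ℕ)) :=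
  ((Finset.Icc 1 n).powerset.powerset).filter (IsNCPartition n)

/-- `NCL(n)` as a finset. -/
noncomputable def NCLF (n : ℕ) : Finset (Finset (Finset ℕ)) :=
  ((Finset.Icc 1 n).powerset.powerset).filter (IsNCL n)

/-- The restriction `π|_E`: the blocks of `π` contained in `E`. -/
def restrictL (π : Finset (Finset ℕ)) (E : Finset ℕ) : Finset (Finset ℕ) :=
  π.filter fun A => A ⊆ E

/-- The partition `β₀` obtained from `β` by leaving blocks of size `≤ 2` intact and
breaking each block `W` with `|W| ≥ 3` into the doubleton `{min W, max W}` together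
with `|W| - 2` singletons. -/
noncomputable def breakBlocks (β : Finset (Finset ℕ)) : Finset (Finset ℕ) :=
  β.biUnion fun W =>
    if W.card ≤ 2 then {W}
    else insert {fmin W, fmax W} ((W \ {fmin W, fmax W}).image fun x => ({x} : Finset ℕ))

lemma fmin_mem' {A : Finset ℕ} (h : A.Nonempty) : fmin A ∈ A := by
  have : ((A : Set ℕ)).Nonempty := by exact_mod_cast h
  exact_mod_cast Nat.sInf_mem this

lemma fmax_mem' {A : Finset ℕ} (h : A.Nonempty) : fmax A ∈ A := by
  have hne : ((A : Set ℕ)).Nonempty := by exact_mod_cast h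
  exact_mod_cast Nat.sSup_mem hne (A.finite_toSet.bddAbove)

lemma fmin_le' {A : Finset ℕ} {a : ℕ} (h : a ∈ A) : fmin A ≤ a :=
  Nat.sInf_le h

lemma le_fmax' {A : Finset ℕ} {a : ℕ} (h : a ∈ A) : a ≤ fmax A :=
  le_csSup (A.finite_toSet.bddAbove) h

lemma block_eq_of_mem' {β : Finset (Finset ℕ)}
    (hdisj : ∀ V ∈ β, ∀ W ∈ β, V ≠ W → V ∩ W = ∅)
    {V W : Finset ℕ} (hV : V ∈ β) (hW : W ∈ β) {x : ℕ}
    (hxV : x ∈ V) (hxW : x ∈ W) : V = W := by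
  by_contra h
  have h1 := hdisj V hV W hW h
  have h2 : x ∈ V ∩ W := Finset.mem_inter.2 ⟨hxV, hxW⟩
  rw [h1] at h2
  exact absurd h2 (Finset.notMem_empty x)

lemma blockOf_eq' {β : Finset (Finset ℕ)}
    (hdisj : ∀ V ∈ β, ∀ W ∈ β, V ≠ W → V ∩ W = ∅)
    {W : Finset ℕ} (hW : W ∈ β) {m : ℕ} (hm : m ∈ W) : blockOf β m = W := by
  unfold blockOf
  have : β.filter (fun V => m ∈ V) = {W} := by
    ext X
    simp only [Finset.mem_filter, Finset.mem_singleton]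
    constructor
    · rintro ⟨hX, hmX⟩; exact block_eq_of_mem' hdisj hX hW hmX hm
    · rintro rfl; exact ⟨hW, hm⟩
  rw [this]; simp

/-- Let `α, β ∈ NC(n)` with `α ≪ β`. For every `β`-special block `V` of
`α` there is a unique block `W` of `β` with `min V = min W` and `max V = max W`
(namely the block of `β` containing `min V`), and the resulting correspondence is a
bijection from the `β`-special blocks of `α` onto the blocks of `β`. -/
theorem stmt7 (n : ℕ) (α β : Finset (Finset ℕ))
    (hα : IsNCPartition n α) (hβ : IsNCPartition n β) (hll : LL α β) :
    (∀ V ∈ α, SpecialBlock β V →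
      ∃! W, W ∈ β ∧ fmin V = fmin W ∧ fmax V = fmax W) ∧
    (∀ V ∈ α, SpecialBlock β V →
      blockOf β (fmin V) ∈ β ∧ fmin V = fmin (blockOf β (fmin V)) ∧
        fmax V = fmax (blockOf β (fmin V))) ∧
    Set.BijOn (fun V => blockOf β (fmin V))
      {V : Finset ℕ | V ∈ α ∧ SpecialBlock β V}
      {W : Finset ℕ | W ∈ β} := by
  obtain ⟨⟨hαne, hαsub, hαcov, hαdisj⟩, -⟩ := hα
  obtain ⟨⟨hβne, hβsub, hβcov, hβdisj⟩, -⟩ := hβ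
  obtain ⟨href, hmm⟩ := hll
  -- key: for special V ∈ α, blockOf β (fmin V) is the witness block
  have key : ∀ V ∈ α, SpecialBlock β V →
      ∀ W ∈ β, fmin V = fmin W → fmax V = fmax W → blockOf β (fmin V) = W := by
    intro V hV hsp W hW h1 _
    have hWne : W.Nonempty := hβne W hW
    have : fmin V ∈ W := h1 ▸ fmin_mem' hWne
    exact blockOf_eq' hβdisj hW this
  have uniq : ∀ V ∈ α, SpecialBlock β V →
      ∃! W, W ∈ β ∧ fmin V = fmin W ∧ fmax V = fmax W := by
    intro V hV hsp
    obtain ⟨W, hW, h1, h2⟩ := hsp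
    refine ⟨W, ⟨hW, h1, h2⟩, ?_⟩
    rintro W' ⟨hW', h1', h2'⟩
    have hmW : fmin V ∈ W := h1 ▸ fmin_mem' (hβne W hW)
    have hmW' : fmin V ∈ W' := h1' ▸ fmin_mem' (hβne W' hW')
    exact block_eq_of_mem' hβdisj hW' hW hmW' hmW
  have part2 : ∀ V ∈ α, SpecialBlock β V →
      blockOf β (fmin V) ∈ β ∧ fmin V = fmin (blockOf β (fmin V)) ∧
        fmax V = fmax (blockOf β (fmin V)) := by
    intro V hV hsp
    obtain ⟨W, hW, h1, h2⟩ := hsp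
    have hbeq := key V hV ⟨W, hW, h1, h2⟩ W hW h1 h2
    rw [hbeq]
    exact ⟨hW, h1, h2⟩
  refine ⟨uniq, part2, ?_, ?_, ?_⟩
  · -- MapsTo
    rintro V ⟨hV, hsp⟩
    exact (part2 V hV hsp).1
  · -- InjOn
    rintro V ⟨hV, hspV⟩ V' ⟨hV', hspV'⟩ heq
    have p2 := part2 V hV hspV
    have p2' := part2 V' hV' hspV'
    simp only at heq
    have hmin : fmin V = fmin V' := by
      rw [p2.2.1, p2'.2.1, heq]
    have hxV : fmin V ∈ V := fmin_mem' (hαne V hV)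
    have hxV' : fmin V ∈ V' := hmin ▸ fmin_mem' (hαne V' hV')
    exact block_eq_of_mem' hαdisj hV hV' hxV hxV'
  · -- SurjOn
    rintro W hW
    simp only [Set.mem_setOf_eq] at hW
    obtain ⟨V, hV, hminV, hmaxV⟩ := hmm W hW
    have hVne : V.Nonempty := hαne V hV
    obtain ⟨W', hW', hsub⟩ := href V hV
    have hWeq : W' = W :=
      block_eq_of_mem' hβdisj hW' hW (hsub hminV) (fmin_mem' (hβne W hW))
    subst hWeq
    have h1 : fmin V = fmin W' :=
      le_antisymm (fmin_le' hminV) (fmin_le' (hsub (fmin_mem' hVne)))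
    have h2 : fmax V = fmax W' :=
      le_antisymm (le_fmax' (hsub (fmax_mem' hVne))) (le_fmax' hmaxV)
    have hsp : SpecialBlock β V := ⟨W', hW', h1, h2⟩
    refine ⟨V, ⟨hV, hsp⟩, ?_⟩
    exact key V hV hsp W' hW' h1 h2
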